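/- Let D be a commutative domain, n ≥ 2, and s = s_0,…,s_{1-n} an essential sequence over D with a minimal system (λ, n', λ', ⟨·,·⟩, ∇): λ a minimal solution for s with L = LC_n, λ' a minimal solution for s' = s_0,…,s_{1-n'} with L' = LC_{n'}, where n' = max{1 ≤ j < n : LC_j < LC_n}, L + L' = n' + 1, and ∇ = λ_2 λ'_1 − λ_1 λ'_2 ∈ D \ {0}. Let f = (f_1, f_2) with x f_2 = [f_1 · s̄], and set m = f_2 λ_1 − f_1 λ_2, m' = f_2 λ'_1 − f_1 λ'_2. Then f_1 is a nonzero annihilating polynomial of s if and only if deg m' = deg f_1 − L and deg m ≤ deg f_1 + L − n − 1 (with deg 0 = −∞). -/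

import Mathlib

open Polynomial in
/-- φ of degree d satisfies the annihilating condition for the length-`n` sequence
`s₀, s₋₁, …, s₁₋ₙ` (where `s k` denotes `s₋ₖ`). -/
def AnnCond {D : Type*} [CommRing D] (n : ℕ) (s : ℕ → D) (φ : Polynomial D) : Prop :=
  ∀ t : ℕ, t + φ.natDegree + 1 ≤ n →
    ∑ j ∈ Finset.range (φ.natDegree + 1), φ.coeff j * s (t + j) = 0

/-- φ is a nonzero annihilating polynomial of the length-`n` sequence `s`. -/
def Annihilates {D : Type*} [CommRing D] (n : ℕ) (s : ℕ → D) (φ : Polynomial D) : Prop :=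
  φ ≠ 0 ∧ AnnCond n s φ

/-- Linear complexity: minimal degree of a nonzero annihilating polynomial. -/
noncomputable def LC {D : Type*} [CommRing D] (n : ℕ) (s : ℕ → D) : ℕ :=
  sInf {d | ∃ φ : Polynomial D, Annihilates n s φ ∧ φ.natDegree = d}

/-- `x·ψ = [φ·s̄]`, the strictly-positive-degree part of `φ·s̄`, expressed coefficientwise. -/
def SeqNum {D : Type*} [CommRing D] (n : ℕ) (s : ℕ → D) (φ ψ : Polynomial D) : Prop :=
  ∀ k : ℕ, ψ.coeff k = ∑ j ∈ Finset.range (φ.natDegree + 1),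
    if k + 1 ≤ j ∧ j - (k + 1) < n then φ.coeff j * s (j - (k + 1)) else 0

/-- `(φ, ψ)` is a solution for the length-`n` sequence `s`. -/
def IsSolution {D : Type*} [CommRing D] (n : ℕ) (s : ℕ → D) (φ ψ : Polynomial D) : Prop :=
  Annihilates n s φ ∧ SeqNum n s φ ψ

section AnnHelpers
open Polynomial Finset

variable {D : Type*} [CommRing D]

noncomputable def Spoly (n : ℕ) (s : ℕ → D) : Polynomial D :=
  ∑ i ∈ Finset.range n, C (s i) * X ^ (n - 1 - i)

lemma Spoly_coeff (n : ℕ) (s : ℕ → D) (q : ℕ) :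
    (Spoly n s).coeff q = if q < n then s (n - 1 - q) else 0 := by
  rw [Spoly, finset_sum_coeff]
  simp only [coeff_C_mul, coeff_X_pow, mul_ite, mul_one, mul_zero]
  split_ifs with h
  · rw [Finset.sum_eq_single (n - 1 - q)]
    · rw [if_pos (by omega)]
    · intro i hi hne
      rw [Finset.mem_range] at hi
      rw [if_neg (by omega)]
    · intro hmem
      exact absurd (Finset.mem_range.2 (by omega)) hmem
  · apply Finset.sum_eq_zero
    intro i hi
    rw [Finset.mem_range] at hi
    rw [if_neg (by omega)]

lemma Vmul {p q : Polynomial D} {a b : ℕ}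
    (hp : ∀ k, a ≤ k → p.coeff k = 0) (hq : ∀ k, b ≤ k → q.coeff k = 0)
    {k : ℕ} (hk : a + b ≤ k + 1) : (p * q).coeff k = 0 := by
  rw [coeff_mul]
  apply Finset.sum_eq_zero
  intro x hx
  rw [Finset.HasAntidiagonal.mem_antidiagonal] at hx
  rcases le_or_gt a x.1 with h | h
  · rw [hp _ h, zero_mul]
  · rw [hq x.2 (by omega), mul_zero]

lemma Vdeg (p : Polynomial D) : ∀ k, p.natDegree + 1 ≤ k → p.coeff k = 0 :=
  fun _ hk => coeff_eq_zero_of_natDegree_lt (by omega)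

lemma seqnum_coeff {n : ℕ} {s : ℕ → D} {φ ψ : Polynomial D} (h : SeqNum n s φ ψ) :
    ∀ k, n ≤ k → (φ * Spoly n s - X ^ n * ψ).coeff k = 0 := by
  intro k' hk'
  obtain ⟨k, rfl⟩ : ∃ k, k' = k + n := ⟨k' - n, by omega⟩
  rw [coeff_sub, coeff_X_pow_mul, h k, sub_eq_zero, coeff_mul,
    Finset.Nat.sum_antidiagonal_eq_sum_range_succ_mk]
  set d := φ.natDegree with hd
  have step1 : ∑ i ∈ Finset.range (k + n + 1), φ.coeff i * (Spoly n s).coeff (k + n - i)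
      = ∑ i ∈ Finset.range (k + n + 1),
          (if k + 1 ≤ i ∧ i - (k + 1) < n then φ.coeff i * s (i - (k + 1)) else 0) := by
    apply Finset.sum_congr rfl
    intro i hi
    rw [Finset.mem_range] at hi
    rw [Spoly_coeff]
    by_cases hki : k + 1 ≤ i
    · have h1 : k + n - i < n := by omega
      have h2 : n - 1 - (k + n - i) = i - (k + 1) := by omega
      have h3 : i - (k + 1) < n := by omega
      rw [if_pos h1, if_pos ⟨hki, h3⟩, h2]
    · rw [if_neg (by omega), if_neg (by omega), mul_zero]
  rw [step1]
  have hzero : ∀ i, (k + 1 ≤ i ∧ i - (k + 1) < n → φ.coeff i = 0) →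
      (if k + 1 ≤ i ∧ i - (k + 1) < n then φ.coeff i * s (i - (k + 1)) else 0) = 0 := by
    intro i hi
    split_ifs with hc
    · rw [hi hc, zero_mul]
    · rfl
  have e1 : ∑ i ∈ Finset.range (k + n + 1),
        (if k + 1 ≤ i ∧ i - (k + 1) < n then φ.coeff i * s (i - (k + 1)) else 0)
      = ∑ i ∈ Finset.range (k + n + d + 2),
        (if k + 1 ≤ i ∧ i - (k + 1) < n then φ.coeff i * s (i - (k + 1)) else 0) := by
    apply Finset.sum_subset (Finset.range_subset_range.2 (by omega))
    intro i _ hni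
    rw [Finset.mem_range, not_lt] at hni
    rw [if_neg (by omega)]
  have e2 : ∑ i ∈ Finset.range (d + 1),
        (if k + 1 ≤ i ∧ i - (k + 1) < n then φ.coeff i * s (i - (k + 1)) else 0)
      = ∑ i ∈ Finset.range (k + n + d + 2),
        (if k + 1 ≤ i ∧ i - (k + 1) < n then φ.coeff i * s (i - (k + 1)) else 0) := by
    apply Finset.sum_subset (Finset.range_subset_range.2 (by omega))
    intro i _ hni
    rw [Finset.mem_range, not_lt] at hni
    exact hzero i (fun _ => coeff_eq_zero_of_natDegree_lt (by omega))
  rw [e1, ← e2]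

lemma coeff_mul_Spoly {n : ℕ} {s : ℕ → D} {φ : Polynomial D} {m : ℕ}
    (hm : m < n) (hdm : φ.natDegree ≤ m) :
    (φ * Spoly n s).coeff m
      = ∑ j ∈ Finset.range (φ.natDegree + 1), φ.coeff j * s (n - 1 - m + j) := by
  rw [coeff_mul, Finset.Nat.sum_antidiagonal_eq_sum_range_succ_mk]
  have step1 : ∀ i ∈ Finset.range (m + 1),
      φ.coeff i * (Spoly n s).coeff (m - i) = φ.coeff i * s (n - 1 - m + i) := by
    intro i hi
    rw [Finset.mem_range] at hi
    rw [Spoly_coeff, if_pos (by omega)]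
    congr 2
    omega
  rw [Finset.sum_congr rfl step1]
  symm
  apply Finset.sum_subset (Finset.range_subset_range.2 (by omega))
  intro i _ hni
  rw [Finset.mem_range, not_lt] at hni
  rw [coeff_eq_zero_of_natDegree_lt (by omega), zero_mul]

lemma anncond_iff {n : ℕ} {s : ℕ → D} {φ : Polynomial D} :
    AnnCond n s φ ↔ ∀ m, φ.natDegree ≤ m → m < n → (φ * Spoly n s).coeff m = 0 := by
  constructor
  · intro h m hdm hmn
    rw [coeff_mul_Spoly hmn hdm]
    exact h (n - 1 - m) (by omega)
  · intro h t ht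
    have hm : φ.natDegree ≤ n - 1 - t := by omega
    have hmn : n - 1 - t < n := by omega
    have h2 := h (n - 1 - t) hm hmn
    rw [coeff_mul_Spoly hmn hm] at h2
    have e : n - 1 - (n - 1 - t) = t := by omega
    rw [e] at h2
    exact h2

lemma sol_coeff {n : ℕ} {s : ℕ → D} {φ ψ : Polynomial D}
    (hann : AnnCond n s φ) (hsn : SeqNum n s φ ψ) :
    ∀ k, φ.natDegree ≤ k → (φ * Spoly n s - X ^ n * ψ).coeff k = 0 := by
  intro k hk
  rcases le_or_gt n k with h | h
  · exact seqnum_coeff hsn k h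
  · rw [coeff_sub, anncond_iff.1 hann k hk h, coeff_X_pow_mul', if_neg (by omega),
      sub_zero]


end AnnHelpers

open Polynomial in
/-- Characterisation of annihilating polynomials via a minimal system for an
essential sequence: `f₁ ∈ Ann(s)^×` iff `deg m' = deg f₁ − L` and
`deg m ≤ deg f₁ + L − n − 1` (with `deg 0 = −∞`). -/
theorem annihilates_iff_pairing_degrees {D : Type*} [CommRing D] [IsDomain D]
    (n : ℕ) (hn : 2 ≤ n) (s : ℕ → D)
    (hess : LC 1 s < LC n s)
    (n' : ℕ) (hn'1 : 1 ≤ n') (hn'n : n' < n)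
    (hn'lt : LC n' s < LC n s) (hn'max : ∀ j, n' < j → j < n → LC n s ≤ LC j s)
    (lam₁ lam₂ lam'₁ lam'₂ : Polynomial D)
    (hlam : IsSolution n s lam₁ lam₂) (hlamdeg : lam₁.natDegree = LC n s)
    (hlam' : IsSolution n' s lam'₁ lam'₂) (hlam'deg : lam'₁.natDegree = LC n' s)
    (hLL' : LC n s + LC n' s = n' + 1)
    (nabla : D) (hnabla : nabla ≠ 0)
    (hB : lam₂ * lam'₁ - lam₁ * lam'₂ = C nabla)
    (f₁ f₂ : Polynomial D) (hf₂ : SeqNum n s f₁ f₂) :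
    Annihilates n s f₁ ↔
      ((f₂ * lam'₁ - f₁ * lam'₂ ≠ 0 ∧
          (f₂ * lam'₁ - f₁ * lam'₂).natDegree + LC n s = f₁.natDegree) ∧
        (f₂ * lam₁ - f₁ * lam₂ = 0 ∨
          ((f₂ * lam₁ - f₁ * lam₂).natDegree : ℤ) + n + 1 ≤
            (f₁.natDegree : ℤ) + LC n s)) := by
  obtain ⟨⟨hlam1ne, hlamann⟩, hlamsn⟩ := hlam
  obtain ⟨⟨hlam'1ne, hlam'ann⟩, hlam'sn⟩ := hlam'
  obtain ⟨L, hL_def⟩ : ∃ L, L = LC n s := ⟨_, rfl⟩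
  obtain ⟨L', hL'_def⟩ : ∃ L', L' = LC n' s := ⟨_, rfl⟩
  obtain ⟨d, hd_def⟩ : ∃ d, d = f₁.natDegree := ⟨_, rfl⟩
  obtain ⟨r, hr_def⟩ : ∃ r, r = f₁ * Spoly n s - X ^ n * f₂ := ⟨_, rfl⟩
  obtain ⟨ρ, hρ_def⟩ : ∃ ρ, ρ = lam₁ * Spoly n s - X ^ n * lam₂ := ⟨_, rfl⟩
  obtain ⟨ρ', hρ'_def⟩ : ∃ ρ', ρ' = lam'₁ * Spoly n' s - X ^ n' * lam'₂ := ⟨_, rfl⟩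
  obtain ⟨g, hg_def⟩ : ∃ g, g = lam'₁ * Spoly n s - X ^ n * lam'₂ := ⟨_, rfl⟩
  obtain ⟨m, hm_def⟩ : ∃ m, m = f₂ * lam₁ - f₁ * lam₂ := ⟨_, rfl⟩
  obtain ⟨m', hm'_def⟩ : ∃ m', m' = f₂ * lam'₁ - f₁ * lam'₂ := ⟨_, rfl⟩
  rw [← hm_def, ← hm'_def, ← hd_def, ← hL_def]
  have hL1 : 1 ≤ L := by omega
  have hLn : L ≤ n := by omega
  -- V-facts
  have hVr : ∀ k, n ≤ k → r.coeff k = 0 := by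
    intro k hk; rw [hr_def]; exact seqnum_coeff hf₂ k hk
  have hVρ : ∀ k, L ≤ k → ρ.coeff k = 0 := by
    intro k hk; rw [hρ_def]; exact sol_coeff hlamann hlamsn k (by omega)
  have hVρ' : ∀ k, L' ≤ k → ρ'.coeff k = 0 := by
    intro k hk; rw [hρ'_def]; exact sol_coeff hlam'ann hlam'sn k (by omega)
  have hVT : ∀ k, n - n' ≤ k → (Spoly n s - X ^ (n - n') * Spoly n' s).coeff k = 0 := by
    intro q hq
    rw [coeff_sub, coeff_X_pow_mul', if_pos hq, Spoly_coeff, Spoly_coeff]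
    rcases lt_or_ge q n with h | h
    · rw [if_pos h, if_pos (by omega)]
      have e : n' - 1 - (q - (n - n')) = n - 1 - q := by omega
      rw [e, sub_self]
    · rw [if_neg (by omega), if_neg (by omega), sub_zero]
  have hpow : (X : Polynomial D) ^ (n - n') * X ^ n' = X ^ n := by
    rw [← pow_add, Nat.sub_add_cancel hn'n.le]
  have hgalt : g = lam'₁ * (Spoly n s - X ^ (n - n') * Spoly n' s)
      + X ^ (n - n') * ρ' := by
    rw [hg_def, hρ'_def]; linear_combination lam'₂ * hpow
  have hVg : ∀ k, n - L + 1 ≤ k → g.coeff k = 0 := by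
    intro k hk
    rw [hgalt, coeff_add, coeff_X_pow_mul', if_pos (by omega), hVρ' _ (by omega),
      Vmul (Vdeg lam'₁) hVT (by omega), add_zero]
  have hgnat : g.natDegree ≤ n - L :=
    natDegree_le_iff_coeff_eq_zero.mpr fun N hN => hVg N (by omega)
  -- nabla identity
  have hInab : X ^ n * C nabla = lam₁ * g - lam'₁ * ρ := by
    rw [hg_def, hρ_def, ← hB]; ring
  have hcoefnab : (X ^ n * C nabla).coeff n = nabla := by
    have h0 := coeff_X_pow_mul (C nabla) n 0
    simpa using h0

  have hc2 : (lam₁ * g).coeff n = lam₁.coeff L * g.coeff (n - L) := by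
    have := coeff_mul_add_eq_of_natDegree_le (f := lam₁) (g := g)
      (by rw [hlamdeg, ← hL_def]) hgnat
    rwa [show L + (n - L) = n by omega] at this
  have hgtop : lam₁.coeff L * g.coeff (n - L) = nabla := by
    have h1 : (X ^ n * C nabla).coeff n = (lam₁ * g - lam'₁ * ρ).coeff n := by
      rw [hInab]
    rw [hcoefnab, coeff_sub, hc2, Vmul (Vdeg lam'₁) hVρ (by omega), sub_zero] at h1
    exact h1.symm
  have hgne : g.coeff (n - L) ≠ 0 := fun h => hnabla (by rw [← hgtop, h, mul_zero])
  -- pairing identities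
  have hIm : X ^ n * m = f₁ * ρ - lam₁ * r := by
    rw [hm_def, hρ_def, hr_def]; ring
  have hIm' : X ^ n * m' = f₁ * g - lam'₁ * r := by
    rw [hm'_def, hg_def, hr_def]; ring
  constructor
  · rintro ⟨hf1ne, hfann⟩
    have hdL : L ≤ d := by
      have h1 : LC n s ≤ f₁.natDegree := Nat.sInf_le ⟨f₁, ⟨hf1ne, hfann⟩, rfl⟩
      omega
    have hVrd : ∀ k, d ≤ k → r.coeff k = 0 := by
      intro k hk; rw [hr_def]; exact sol_coeff hfann hf₂ k (by omega)
    have hlead : f₁.coeff d ≠ 0 := by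
      rw [hd_def, coeff_natDegree]
      exact leadingCoeff_ne_zero.mpr hf1ne
    have key : m'.coeff (d - L) = f₁.coeff d * g.coeff (n - L) := by
      have h1 : (X ^ n * m').coeff (d - L + n) = m'.coeff (d - L) :=
        coeff_X_pow_mul m' n (d - L)
      have h2 : (f₁ * g).coeff (d + (n - L)) = f₁.coeff d * g.coeff (n - L) :=
        coeff_mul_add_eq_of_natDegree_le (by omega) hgnat
      have h3 : (lam'₁ * r).coeff (d - L + n) = 0 :=
        Vmul (Vdeg lam'₁) hVrd (by omega)
      have e : d + (n - L) = d - L + n := by omega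
      rw [← h1, hIm', coeff_sub, h3, sub_zero, ← e, h2]
    have hm'c : m'.coeff (d - L) ≠ 0 := by
      rw [key]; exact mul_ne_zero hlead hgne
    have hm'ne : m' ≠ 0 := fun h => hm'c (by rw [h, coeff_zero])
    have hub : m'.natDegree ≤ d - L := by
      refine natDegree_le_iff_coeff_eq_zero.mpr fun N hN => ?_
      have h1 : (X ^ n * m').coeff (N + n) = m'.coeff N := coeff_X_pow_mul m' n N
      rw [← h1, hIm', coeff_sub, Vmul (Vdeg f₁) hVg (by omega),
        Vmul (Vdeg lam'₁) hVrd (by omega), sub_zero]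
    have hlb : d - L ≤ m'.natDegree := le_natDegree_of_ne_zero hm'c
    refine ⟨⟨hm'ne, by omega⟩, ?_⟩
    by_cases hm0 : m = 0
    · exact Or.inl hm0
    · right
      have hVXm : ∀ k, d + L ≤ k → (X ^ n * m).coeff k = 0 := by
        intro k hk
        rw [hIm, coeff_sub, Vmul (Vdeg f₁) hVρ (by omega),
          Vmul (Vdeg lam₁) hVrd (by omega), sub_zero]
      have hlt : m.natDegree + n < d + L := by
        by_contra hcon
        push_neg at hcon
        have h1 := hVXm (m.natDegree + n) hcon
        rw [coeff_X_pow_mul, coeff_natDegree] at h1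
        exact hm0 (leadingCoeff_eq_zero.mp h1)
      omega
  · rintro ⟨⟨hm'ne, hm'deg⟩, hm⟩
    have hf1ne : f₁ ≠ 0 := by
      intro h0
      apply hm'ne
      have hf2 : f₂ = 0 := by
        apply Polynomial.ext
        intro k
        rw [coeff_zero, hf₂ k]
        apply Finset.sum_eq_zero
        intro j hj
        rw [Finset.mem_range, h0, natDegree_zero] at hj
        rw [if_neg (by omega)]
      rw [hm'_def, hf2, h0]; ring
    have hVXm : ∀ k, d + L ≤ k → (X ^ n * m).coeff k = 0 := by
      rcases hm with h0 | hmle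
      · intro k _; rw [h0, mul_zero, coeff_zero]
      · have hmle' : m.natDegree + n + 1 ≤ d + L := by exact_mod_cast hmle
        intro k hk
        rw [coeff_X_pow_mul', if_pos (by omega)]
        exact coeff_eq_zero_of_natDegree_lt (by omega)
    have hVlr : ∀ k, d + L ≤ k → (lam₁ * r).coeff k = 0 := by
      intro k hk
      have h1 : lam₁ * r = f₁ * ρ - X ^ n * m := by
        rw [hr_def, hρ_def, hm_def]; ring
      rw [h1, coeff_sub, Vmul (Vdeg f₁) hVρ (by omega), hVXm k hk, sub_zero]
    have hVrd : ∀ k, d ≤ k → r.coeff k = 0 := by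
      by_contra hcon
      push_neg at hcon
      obtain ⟨k, hk, hne⟩ := hcon
      have hrne : r ≠ 0 := fun h => hne (by rw [h, coeff_zero])
      have h1 : (lam₁ * r).natDegree = L + r.natDegree := by
        rw [natDegree_mul hlam1ne hrne, hlamdeg, hL_def]
      have h2 : (lam₁ * r).coeff (L + r.natDegree) = 0 := by
        have h3 := le_natDegree_of_ne_zero hne
        exact hVlr _ (by omega)
      rw [← h1, coeff_natDegree] at h2
      exact mul_ne_zero hlam1ne hrne (leadingCoeff_eq_zero.mp h2)
    refine ⟨hf1ne, anncond_iff.mpr fun k hk hkn => ?_⟩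
    have hsplit : f₁ * Spoly n s = r + X ^ n * f₂ := by rw [hr_def]; ring
    rw [hsplit, coeff_add, hVrd k (by omega), coeff_X_pow_mul', if_neg (by omega),
      add_zero]
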